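/- For a Coxeter system (W,S), define the monoid M(W) generated by elements m(w), w ∈ W, with relations m(s)m(w) = m(sw) if ℓ(sw) > ℓ(w) and m(s)m(w) = m(w) if ℓ(sw) < ℓ(w), for s ∈ S. Then for every s ∈ S, m(s)² = m(s), and the generators m(s) for s ∈ S satisfy the braid relations of (W,S). -/

import Mathlib

open Real CoxeterSystem List Finsupp

namespace Stmt10

variable {B : Type*}

noncomputable def kco (M : CoxeterMatrix B) (a b : B) : ℝ := -Real.cos (Real.pi / M a b)

lemma kco_self (M : CoxeterMatrix B) (a : B) : kco M a a = 1 := by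
  simp [kco, M.diagonal a]

noncomputable def ipf (M : CoxeterMatrix B) (a : B) (v : B →₀ ℝ) : ℝ :=
  Finsupp.linearCombination ℝ (kco M a) v

lemma ipf_single (M : CoxeterMatrix B) (a x : B) (c : ℝ) :
    ipf M a (Finsupp.single x c) = c * kco M a x := by
  simp [ipf, Finsupp.linearCombination_single, smul_eq_mul]

lemma ipf_add (M : CoxeterMatrix B) (a : B) (u v : B →₀ ℝ) :
    ipf M a (u + v) = ipf M a u + ipf M a v := by simp [ipf]

lemma ipf_smul (M : CoxeterMatrix B) (a : B) (c : ℝ) (v : B →₀ ℝ) :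
    ipf M a (c • v) = c * ipf M a v := by simp [ipf]

lemma ipf_sub (M : CoxeterMatrix B) (a : B) (u v : B →₀ ℝ) :
    ipf M a (u - v) = ipf M a u - ipf M a v := by simp [ipf]

/-- The reflection in the geometric representation. -/
noncomputable def sig (M : CoxeterMatrix B) (b : B) (v : B →₀ ℝ) : B →₀ ℝ :=
  v - (2 * ipf M b v) • Finsupp.single b 1

lemma ipf_sig (M : CoxeterMatrix B) (a b : B) (v : B →₀ ℝ) :
    ipf M a (sig M b v) = ipf M a v - 2 * ipf M b v * kco M a b := by
  rw [sig, ipf_sub, ipf_smul, ipf_single]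
  ring

lemma sig_invol (M : CoxeterMatrix B) (b : B) : Function.Involutive (sig M b) := by
  intro v
  have h : ipf M b (sig M b v) = - ipf M b v := by rw [ipf_sig, kco_self]; ring
  show sig M b v - (2 * ipf M b (sig M b v)) • Finsupp.single b 1 = v
  rw [h, sig]
  module

lemma sig_add (M : CoxeterMatrix B) (b : B) (u v : B →₀ ℝ) :
    sig M b (u + v) = sig M b u + sig M b v := by
  simp only [sig, ipf_add]
  module

lemma sig_smul (M : CoxeterMatrix B) (b : B) (c : ℝ) (v : B →₀ ℝ) :
    sig M b (c • v) = c • sig M b v := by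
  simp only [sig, ipf_smul]
  module

lemma sig_fixed (M : CoxeterMatrix B) (b : B) (v : B →₀ ℝ) (h : ipf M b v = 0) :
    sig M b v = v := by simp [sig, h]

/-- The permutation given by `sig`. -/
noncomputable def sigP (M : CoxeterMatrix B) (b : B) : Equiv.Perm (B →₀ ℝ) :=
  (sig_invol M b).toPerm

lemma sigP_apply (M : CoxeterMatrix B) (b : B) (v : B →₀ ℝ) : sigP M b v = sig M b v := rfl

end Stmt10

namespace Stmt10

lemma kco_symm (M : CoxeterMatrix B) (a b : B) : kco M a b = kco M b a := by
  rw [kco, kco, M.symmetric]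

lemma sin_rec (θ x : ℝ) :
    Real.sin (x + 2*θ) + Real.sin x = 2 * Real.cos θ * Real.sin (x + θ) := by
  have h1 : x + 2*θ = (x+θ) + θ := by ring
  have h2 : x = (x+θ) - θ := by ring
  have a1 : Real.sin (x + 2*θ) = Real.sin (x+θ) * Real.cos θ + Real.cos (x+θ) * Real.sin θ := by
    rw [h1, Real.sin_add]
  have a2 : Real.sin x = Real.sin (x+θ) * Real.cos θ - Real.cos (x+θ) * Real.sin θ := by
    nth_rewrite 1 [h2]
    rw [Real.sin_sub]
  linarith

section Pair

variable (M : CoxeterMatrix B) (b b' : B)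

lemma mulP_apply (v : B →₀ ℝ) :
    (sigP M b * sigP M b') v = sig M b (sig M b' v) := rfl

lemma pow_mulP_succ (p : ℕ) (v : B →₀ ℝ) :
    ((sigP M b * sigP M b') ^ (p+1)) v
      = sig M b (sig M b' (((sigP M b * sigP M b') ^ p) v)) := by
  rw [pow_succ']
  rfl

lemma pow_mulP_add (p : ℕ) (u v : B →₀ ℝ) :
    ((sigP M b * sigP M b') ^ p) (u + v)
      = ((sigP M b * sigP M b') ^ p) u + ((sigP M b * sigP M b') ^ p) v := by
  induction p with
  | zero => simp
  | succ p ih => rw [pow_mulP_succ, pow_mulP_succ, pow_mulP_succ, ih, sig_add, sig_add]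

lemma pow_mulP_smul (p : ℕ) (c : ℝ) (v : B →₀ ℝ) :
    ((sigP M b * sigP M b') ^ p) (c • v) = c • ((sigP M b * sigP M b') ^ p) v := by
  induction p with
  | zero => simp
  | succ p ih => rw [pow_mulP_succ, pow_mulP_succ, ih, sig_smul, sig_smul]

lemma pow_mulP_fixed (p : ℕ) (v : B →₀ ℝ) (h1 : ipf M b v = 0) (h2 : ipf M b' v = 0) :
    ((sigP M b * sigP M b') ^ p) v = v := by
  induction p with
  | zero => rfl
  | succ p ih => rw [pow_mulP_succ, ih, sig_fixed M b' v h2, sig_fixed M b v h1]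

lemma pair_ne (hm2 : 2 ≤ M b b') : b ≠ b' := by
  intro h
  subst h
  rw [M.diagonal] at hm2
  omega

lemma kco_eq_neg_cos : kco M b b' = - Real.cos (Real.pi / M b b') := rfl

lemma tau_eb :
    sig M b (sig M b' (Finsupp.single b 1))
      = (4 * Real.cos (Real.pi / M b b') ^ 2 - 1) • Finsupp.single b 1
        + (2 * Real.cos (Real.pi / M b b')) • Finsupp.single b' (1:ℝ) := by
  set c := Real.cos (Real.pi / M b b') with hc
  have h1 : sig M b' (Finsupp.single b 1) =
      Finsupp.single b 1 + (2*c) • Finsupp.single b' (1:ℝ) := by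
    rw [sig, ipf_single, kco_symm, kco_eq_neg_cos, ← hc]
    module
  rw [h1, sig_add, sig_smul, sig, sig, ipf_single, ipf_single, kco_self, kco_eq_neg_cos, ← hc]
  module

lemma tau_ebp :
    sig M b (sig M b' (Finsupp.single b' 1))
      = (-(2 * Real.cos (Real.pi / M b b'))) • Finsupp.single b 1
        + (-1 : ℝ) • Finsupp.single b' (1:ℝ) := by
  set c := Real.cos (Real.pi / M b b') with hc
  have h1 : sig M b' (Finsupp.single b' (1:ℝ)) = - Finsupp.single b' 1 := by
    rw [sig, ipf_single, kco_self]
    module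
  have h2 : sig M b (Finsupp.single b' (1:ℝ)) =
      Finsupp.single b' 1 + (2*c) • Finsupp.single b (1:ℝ) := by
    rw [sig, ipf_single, kco_eq_neg_cos, ← hc]
    module
  rw [h1]
  have h3 : sig M b (-Finsupp.single b' (1:ℝ)) = - sig M b (Finsupp.single b' 1) := by
    have := sig_smul M b (-1 : ℝ) (Finsupp.single b' 1)
    simpa using this
  rw [h3, h2]
  module

end Pair

end Stmt10

namespace Stmt10

section Pair2

variable (M : CoxeterMatrix B) (b b' : B)

/-- The key trigonometric induction. -/
lemma tau_pow_formula (p : ℕ) :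
    Real.sin (Real.pi / M b b') • ((sigP M b * sigP M b') ^ p) (Finsupp.single b 1)
      = Real.sin ((2*(p:ℝ)+1) * (Real.pi / M b b')) • Finsupp.single b 1
        + Real.sin ((2*(p:ℝ)) * (Real.pi / M b b')) • Finsupp.single b' 1
    ∧ Real.sin (Real.pi / M b b') • ((sigP M b * sigP M b') ^ p) (Finsupp.single b' 1)
      = (-Real.sin ((2*(p:ℝ)) * (Real.pi / M b b'))) • Finsupp.single b 1
        + (-Real.sin ((2*(p:ℝ)-1) * (Real.pi / M b b'))) • Finsupp.single b' 1 := by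
  set θ := Real.pi / M b b' with hθ
  set c := Real.cos θ with hc
  have tb : sig M b (sig M b' (Finsupp.single b 1))
      = (4*c^2-1) • Finsupp.single b 1 + (2*c) • Finsupp.single b' (1:ℝ) := by
    rw [hc, hθ]; exact tau_eb M b b'
  have tbp : sig M b (sig M b' (Finsupp.single b' 1))
      = (-(2*c)) • Finsupp.single b 1 + (-1 : ℝ) • Finsupp.single b' (1:ℝ) := by
    rw [hc, hθ]; exact tau_ebp M b b'
  have tadd : ∀ (x y : ℝ) (u v : B →₀ ℝ), sig M b (sig M b' (x • u + y • v))
      = x • sig M b (sig M b' u) + y • sig M b (sig M b' v) := by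
    intro x y u v
    rw [sig_add, sig_smul, sig_smul, sig_add, sig_smul, sig_smul]
  induction p with
  | zero =>
      constructor
      · rw [pow_zero]
        have h1 : (2*((0:ℕ):ℝ)) * θ = 0 := by norm_num
        have h2 : (2*((0:ℕ):ℝ)+1) * θ = θ := by norm_num
        rw [h1, h2, Real.sin_zero]
        simp
      · rw [pow_zero]
        have h1 : (2*((0:ℕ):ℝ)) * θ = 0 := by norm_num
        have h2 : (2*((0:ℕ):ℝ)-1) * θ = -θ := by push_cast; ring
        rw [h1, h2, Real.sin_neg, Real.sin_zero]
        simp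
  | succ p ih =>
      obtain ⟨ih1, ih2⟩ := ih
      have r2 : Real.sin ((2*(p:ℝ)+1)*θ + 2*θ) + Real.sin ((2*(p:ℝ)+1)*θ)
          = 2 * c * Real.sin ((2*(p:ℝ)+1)*θ + θ) := sin_rec θ _
      have e2 : Real.sin ((2*((p:ℝ)+1)) * θ)
          = 2 * c * Real.sin ((2*(p:ℝ)+1)*θ) - Real.sin ((2*(p:ℝ))*θ) := by
        have r1 : Real.sin ((2*(p:ℝ))*θ + 2*θ) + Real.sin ((2*(p:ℝ))*θ)
            = 2 * c * Real.sin ((2*(p:ℝ))*θ + θ) := sin_rec θ _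
        have h : (2*((p:ℝ)+1)) * θ = (2*(p:ℝ))*θ + 2*θ := by ring
        have h' : (2*(p:ℝ)+1)*θ = (2*(p:ℝ))*θ + θ := by ring
        rw [h, h']
        linarith
      have e2' : Real.sin ((2*(p:ℝ)+1)*θ + θ)
          = 2 * c * Real.sin ((2*(p:ℝ)+1)*θ) - Real.sin ((2*(p:ℝ))*θ) := by
        rw [show (2*(p:ℝ)+1)*θ + θ = (2*((p:ℝ)+1)) * θ by ring] at *
        exact e2
      have e1 : Real.sin ((2*((p:ℝ)+1)+1) * θ)
          = (4*c^2-1) * Real.sin ((2*(p:ℝ)+1)*θ) - 2*c*Real.sin ((2*(p:ℝ))*θ) := by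
        rw [show (2*((p:ℝ)+1)+1) * θ = (2*(p:ℝ)+1)*θ + 2*θ by ring]
        linear_combination r2 + 2*c*e2'
      have e3 : Real.sin ((2*((p:ℝ)+1)-1) * θ) = Real.sin ((2*(p:ℝ)+1) * θ) := by
        rw [show (2*((p:ℝ)+1)-1) * θ = (2*(p:ℝ)+1)*θ by ring]
      have step1 : Real.sin θ • ((sigP M b * sigP M b') ^ (p+1)) (Finsupp.single b 1)
          = sig M b (sig M b' (Real.sin θ • ((sigP M b * sigP M b') ^ p) (Finsupp.single b 1))) := by
        rw [pow_mulP_succ, sig_smul, sig_smul]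
      have step2 : Real.sin θ • ((sigP M b * sigP M b') ^ (p+1)) (Finsupp.single b' 1)
          = sig M b (sig M b' (Real.sin θ • ((sigP M b * sigP M b') ^ p) (Finsupp.single b' 1))) := by
        rw [pow_mulP_succ, sig_smul, sig_smul]
      constructor
      · rw [step1, ih1, tadd, tb, tbp]
        push_cast
        rw [e1, e2]
        module
      · have e4 : Real.sin ((2*(p:ℝ)+1)*θ)
            = 2*c*Real.sin ((2*(p:ℝ))*θ) - Real.sin ((2*(p:ℝ)-1)*θ) := by
          have r4 : Real.sin ((2*(p:ℝ)-1)*θ + 2*θ) + Real.sin ((2*(p:ℝ)-1)*θ)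
              = 2 * c * Real.sin ((2*(p:ℝ)-1)*θ + θ) := sin_rec θ _
          rw [show (2*(p:ℝ)-1)*θ + 2*θ = (2*(p:ℝ)+1)*θ by ring,
              show (2*(p:ℝ)-1)*θ + θ = (2*(p:ℝ))*θ by ring] at r4
          linarith
        rw [step2, ih2, tadd, tb, tbp]
        push_cast
        rw [e2, e3, e4]
        module

end Pair2

end Stmt10

namespace Stmt10

section Pair3

variable (M : CoxeterMatrix B) (b b' : B) (hm2 : 2 ≤ M b b')

lemma theta_pos (hm2 : 2 ≤ M b b') : 0 < Real.pi / M b b' :=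
  div_pos Real.pi_pos (by exact_mod_cast Nat.lt_of_lt_of_le Nat.zero_lt_two hm2)

lemma theta_lt_pi (hm2 : 2 ≤ M b b') : Real.pi / M b b' < Real.pi := by
  apply div_lt_self Real.pi_pos
  exact_mod_cast Nat.lt_of_lt_of_le Nat.one_lt_two hm2

lemma sin_theta_pos (hm2 : 2 ≤ M b b') : 0 < Real.sin (Real.pi / M b b') :=
  Real.sin_pos_of_pos_of_lt_pi (theta_pos M b b' hm2) (theta_lt_pi M b b' hm2)

lemma m_theta (hm2 : 2 ≤ M b b') : (M b b' : ℝ) * (Real.pi / M b b') = Real.pi := by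
  have h : (M b b' : ℝ) ≠ 0 := by
    have : M b b' ≠ 0 := by omega
    exact_mod_cast this
  field_simp

lemma tau_pow_m_eb (hm2 : 2 ≤ M b b') :
    ((sigP M b * sigP M b') ^ (M b b')) (Finsupp.single b 1) = Finsupp.single b (1:ℝ) := by
  set θ := Real.pi / M b b' with hθ
  have hS1 : Real.sin θ ≠ 0 := (sin_theta_pos M b b' hm2).ne'
  have key := (tau_pow_formula M b b' (M b b')).1
  have h1 : (2*((M b b' : ℕ):ℝ)+1) * θ = θ + 2 * Real.pi := by
    have := m_theta M b b' hm2
    nlinarith [this]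
  have h2 : (2*((M b b' : ℕ):ℝ)) * θ = 2 * Real.pi := by
    have := m_theta M b b' hm2
    nlinarith [this]
  rw [h1, h2, Real.sin_add_two_pi, Real.sin_two_pi] at key
  apply smul_right_injective (B →₀ ℝ) hS1
  simp only []
  rw [key]
  module

lemma tau_pow_m_ebp (hm2 : 2 ≤ M b b') :
    ((sigP M b * sigP M b') ^ (M b b')) (Finsupp.single b' 1) = Finsupp.single b' (1:ℝ) := by
  set θ := Real.pi / M b b' with hθ
  have hS1 : Real.sin θ ≠ 0 := (sin_theta_pos M b b' hm2).ne'
  have key := (tau_pow_formula M b b' (M b b')).2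
  have h1 : (2*((M b b' : ℕ):ℝ)-1) * θ = (-θ) + 2 * Real.pi := by
    have := m_theta M b b' hm2
    nlinarith [this]
  have h2 : (2*((M b b' : ℕ):ℝ)) * θ = 2 * Real.pi := by
    have := m_theta M b b' hm2
    nlinarith [this]
  rw [h1, h2, Real.sin_add_two_pi, Real.sin_neg, Real.sin_two_pi] at key
  apply smul_right_injective (B →₀ ℝ) hS1
  simp only []
  rw [key]
  module

/-- The braid relation for the geometric representation. -/
lemma sig_rel (hm2 : 2 ≤ M b b') : (sigP M b * sigP M b') ^ (M b b') = 1 := by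
  set θ := Real.pi / M b b' with hθ
  set c := Real.cos θ with hc
  have hs := sin_theta_pos M b b' hm2
  have hD : (1 : ℝ) - c^2 ≠ 0 := by
    have := Real.sin_sq_add_cos_sq θ
    nlinarith
  refine Equiv.ext fun v => ?_
  rw [Equiv.Perm.one_apply]
  set a := ipf M b v with ha
  set a' := ipf M b' v with ha'
  set α := (a + c*a') / (1 - c^2) with hα
  set β := (a' + c*a) / (1 - c^2) with hβ
  set u := v - α • Finsupp.single b 1 - β • Finsupp.single b' (1:ℝ) with hu
  have hK : kco M b b' = -c := by rw [hc, hθ]; rfl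
  have hub : ipf M b u = 0 := by
    rw [hu, ipf_sub, ipf_sub, ipf_smul, ipf_smul, ipf_single, ipf_single, kco_self,
      hK, ← ha, hα, hβ]
    field_simp
    ring
  have hub' : ipf M b' u = 0 := by
    rw [hu, ipf_sub, ipf_sub, ipf_smul, ipf_smul, ipf_single, ipf_single, kco_self,
      kco_symm M b' b, hK, ← ha', hα, hβ]
    field_simp
    ring
  have hv : v = u + α • Finsupp.single b 1 + β • Finsupp.single b' (1:ℝ) := by
    rw [hu]; module
  rw [hv, pow_mulP_add, pow_mulP_add, pow_mulP_smul, pow_mulP_smul,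
    pow_mulP_fixed M b b' _ u hub hub', tau_pow_m_eb M b b' hm2, tau_pow_m_ebp M b b' hm2]

lemma tau_pow_ne (hm2 : 2 ≤ M b b') {p : ℕ} (hp0 : 0 < p) (hp : p < M b b') :
    ((sigP M b * sigP M b') ^ p) (Finsupp.single b 1) ≠ Finsupp.single b (1:ℝ) := by
  set θ := Real.pi / M b b' with hθ
  have hbb' : b ≠ b' := pair_ne M b b' hm2
  have hs := sin_theta_pos M b b' hm2
  have hθpos := theta_pos M b b' hm2
  have hmθ := m_theta M b b' hm2
  intro h
  have key := (tau_pow_formula M b b' p).1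
  rw [h] at key
  have hb'0 : Real.sin ((2*(p:ℝ)) * θ) = 0 := by
    have hcg := congrArg (fun f => f b') key
    simp only [Finsupp.smul_apply, Finsupp.add_apply, smul_eq_mul,
      Finsupp.single_eq_same, Finsupp.single_eq_of_ne hbb',
      Finsupp.single_eq_of_ne (Ne.symm hbb'), mul_zero, mul_one, zero_add] at hcg
    exact hcg.symm
  have hb0 : Real.sin ((2*(p:ℝ)+1) * θ) = Real.sin θ := by
    have hcg := congrArg (fun f => f b) key
    simp only [Finsupp.smul_apply, Finsupp.add_apply, smul_eq_mul,
      Finsupp.single_eq_same, Finsupp.single_eq_of_ne hbb',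
      Finsupp.single_eq_of_ne (Ne.symm hbb'), mul_zero, mul_one, add_zero] at hcg
    exact hcg.symm
  rcases lt_trichotomy (2*p) (M b b') with hlt | heq | hgt
  · have h1 : 0 < (2*(p:ℝ)) * θ := by positivity
    have h2 : (2*(p:ℝ)) * θ < Real.pi := by
      rw [← hmθ]
      apply mul_lt_mul_of_pos_right _ hθpos
      exact_mod_cast hlt
    have hpos := Real.sin_pos_of_pos_of_lt_pi h1 h2
    rw [hb'0] at hpos
    exact lt_irrefl 0 hpos
  · have h1 : (2*(p:ℝ)+1) * θ = θ + Real.pi := by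
      have h2 : (2*(p:ℝ)) * θ = Real.pi := by
        rw [← hmθ]
        norm_cast
        rw [heq]
      nlinarith [h2]
    rw [h1, Real.sin_add_pi] at hb0
    linarith
  · have h1 : Real.pi < (2*(p:ℝ)) * θ := by
      rw [← hmθ]
      apply mul_lt_mul_of_pos_right _ hθpos
      exact_mod_cast hgt
    have h2 : (2*(p:ℝ)) * θ < 2 * Real.pi := by
      have h4 : (p : ℝ) * θ < Real.pi := by
        rw [← hmθ]
        apply mul_lt_mul_of_pos_right _ hθpos
        exact_mod_cast hp
      nlinarith
    have h3 : 0 < Real.sin ((2*(p:ℝ))*θ - Real.pi) :=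
      Real.sin_pos_of_pos_of_lt_pi (by linarith) (by linarith)
    rw [Real.sin_sub_pi, hb'0] at h3
    simp at h3

end Pair3

end Stmt10

namespace Stmt10

lemma liftable_sig (M : CoxeterMatrix B) :
    M.IsLiftable (fun b => sigP M b) := by
  intro b b'
  rcases eq_or_ne b b' with rfl | hne
  · rw [M.diagonal, pow_one]
    refine Equiv.ext fun v => ?_
    rw [Equiv.Perm.one_apply, mulP_apply, sig_invol]
  · rcases Nat.eq_zero_or_pos (M b b') with h0 | h1
    · rw [h0, pow_zero]
    · have hm2 : 2 ≤ M b b' := by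
        have := M.off_diagonal b b' hne
        omega
      exact sig_rel M b b' hm2

variable {W : Type*} [Group W] {M : CoxeterMatrix B}

/-- Order exactness: `(s i * s j) ^ p ≠ 1` for `0 < p < M i j`. -/
theorem order_lemma (cs : CoxeterSystem M W) (i j : B) (hm2 : 2 ≤ M i j)
    {p : ℕ} (hp0 : 0 < p) (hp : p < M i j) :
    (cs.simple i * cs.simple j) ^ p ≠ 1 := by
  intro h
  have hc := congrArg (cs.lift ⟨fun b => sigP M b, liftable_sig M⟩) h
  rw [map_pow, map_mul, CoxeterSystem.lift_apply_simple, CoxeterSystem.lift_apply_simple,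
    map_one] at hc
  have := congrArg (fun (e : Equiv.Perm (B →₀ ℝ)) => e (Finsupp.single i 1)) hc
  simp only [Equiv.Perm.one_apply] at this
  exact tau_pow_ne M i j hm2 hp0 hp this

end Stmt10

namespace Stmt10

section SignRep

open CoxeterSystem
open scoped Classical

variable {W : Type*} [Group W] {M : CoxeterMatrix B}

lemma conj_eq_iff {G : Type*} [Group G] (a x t : G) :
    a * t * a⁻¹ = x ↔ t = a⁻¹ * x * a := by
  constructor
  · rintro rfl; group
  · rintro rfl; group

lemma simple_conj_eq_iff (cs : CoxeterSystem M W) (b : B) (x t : W) :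
    cs.simple b * t * cs.simple b = x ↔ t = cs.simple b * x * cs.simple b := by
  have h := conj_eq_iff (cs.simple b) x t
  rw [cs.inv_simple] at h
  exact h

/-- Tits' sign representation map. -/
noncomputable def eta (cs : CoxeterSystem M W) (b : B) : W × ℤˣ → W × ℤˣ :=
  fun x => (cs.simple b * x.1 * cs.simple b, if x.1 = cs.simple b then -x.2 else x.2)

lemma eta_invol (cs : CoxeterSystem M W) (b : B) : Function.Involutive (eta cs b) := by
  rintro ⟨t, ε⟩
  simp only [eta]
  have hconj : cs.simple b * (cs.simple b * t * cs.simple b) * cs.simple b = t := by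
    simp [mul_assoc, cs.simple_mul_simple_self, cs.simple_mul_simple_cancel_left]
  have hcond : (cs.simple b * t * cs.simple b = cs.simple b) ↔ (t = cs.simple b) := by
    rw [simple_conj_eq_iff, cs.simple_mul_simple_self, one_mul]
  rw [hconj]
  by_cases h : t = cs.simple b
  · rw [if_pos (hcond.mpr h), if_pos h]
    simp
  · rw [if_neg (fun hc => h (hcond.mp hc)), if_neg h]

/-- `eta` as a permutation. -/
noncomputable def etaP (cs : CoxeterSystem M W) (b : B) : Equiv.Perm (W × ℤˣ) :=
  (eta_invol cs b).toPerm

/-- The sign factor of one double step. -/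
noncomputable def Fsgn (cs : CoxeterSystem M W) (b b' : B) : W → ℤˣ :=
  fun x => (if x = cs.simple b' then -1 else 1) *
    (if x = cs.simple b' * cs.simple b * cs.simple b' then -1 else 1)

lemma eta_step (cs : CoxeterSystem M W) (b b' : B) (u : W) (δ : ℤˣ) :
    (etaP cs b * etaP cs b') (u, δ)
      = ((cs.simple b * cs.simple b') * u * ((cs.simple b * cs.simple b'))⁻¹,
          δ * Fsgn cs b b' u) := by
  show eta cs b (eta cs b' (u, δ)) = _
  simp only [eta]
  have h1 : cs.simple b * (cs.simple b' * u * cs.simple b') * cs.simple b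
      = (cs.simple b * cs.simple b') * u * ((cs.simple b * cs.simple b'))⁻¹ := by
    rw [mul_inv_rev, cs.inv_simple, cs.inv_simple]
    simp [mul_assoc]
  have hcond : (cs.simple b' * u * cs.simple b' = cs.simple b)
      ↔ (u = cs.simple b' * cs.simple b * cs.simple b') := simple_conj_eq_iff cs b' _ u
  rw [Prod.mk.injEq]
  refine ⟨h1, ?_⟩
  simp only [Fsgn]
  by_cases hu1 : u = cs.simple b'
  · by_cases hu2 : u = cs.simple b' * cs.simple b * cs.simple b'
    · rw [if_pos (hcond.mpr hu2), if_pos hu1, if_pos hu1, if_pos hu2]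
      simp
    · rw [if_neg (fun hc => hu2 (hcond.mp hc)), if_pos hu1, if_pos hu1, if_neg hu2]
      simp
  · by_cases hu2 : u = cs.simple b' * cs.simple b * cs.simple b'
    · rw [if_pos (hcond.mpr hu2), if_neg hu1, if_neg hu1, if_pos hu2]
      simp
    · rw [if_neg (fun hc => hu2 (hcond.mp hc)), if_neg hu1, if_neg hu1, if_neg hu2]
      simp

lemma eta_pow_apply (cs : CoxeterSystem M W) (b b' : B) (n : ℕ) (t : W) (ε : ℤˣ) :
    ((etaP cs b * etaP cs b') ^ n) (t, ε)
      = ((cs.simple b * cs.simple b')^n * t * (((cs.simple b * cs.simple b')^n))⁻¹,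
          ε * ∏ p ∈ Finset.range n,
            Fsgn cs b b' ((cs.simple b * cs.simple b')^p * t
              * (((cs.simple b * cs.simple b')^p))⁻¹)) := by
  induction n with
  | zero => simp
  | succ n ih =>
      rw [pow_succ' (etaP cs b * etaP cs b') n]
      rw [Equiv.Perm.mul_apply, ih, eta_step]
      rw [Prod.mk.injEq]
      constructor
      · rw [pow_succ' (cs.simple b * cs.simple b') n, mul_inv_rev]
        simp [mul_assoc]
      · rw [Finset.prod_range_succ, ← mul_assoc]

end SignRep

end Stmt10

namespace Stmt10

section SignRep2

open CoxeterSystem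
open scoped Classical

variable {W : Type*} [Group W] {M : CoxeterMatrix B}

lemma conj_pow_shift {G : Type*} [Group G] (q y z : G) (μ p : ℕ)
    (hy : (q^μ)⁻¹ * y * q^μ = z) :
    (q^(p+μ))⁻¹ * y * q^(p+μ) = (q^p)⁻¹ * z * q^p := by
  have h1 : q^(p+μ) = q^μ * q^p := by
    rw [pow_add]
    exact pow_mul_comm q p μ
  calc (q^(p+μ))⁻¹ * y * q^(p+μ)
      = (q^p)⁻¹ * ((q^μ)⁻¹ * y * q^μ) * q^p := by rw [h1]; group
    _ = (q^p)⁻¹ * z * q^p := by rw [hy]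

lemma prod_shift (h : ℕ → ℤˣ) (k : ℕ) (hper : ∀ p, h (p + (k+1)) = h p) (a : ℕ) :
    (∏ p ∈ Finset.range (k+1), h (p + a)) = ∏ p ∈ Finset.range (k+1), h p := by
  induction a with
  | zero => simp
  | succ a ih =>
      have l1 : (∏ p ∈ Finset.range (k+1), h (p + (a+1)))
          = (∏ p ∈ Finset.range k, h ((p+1) + a)) * h (a + (k+1)) := by
        rw [Finset.prod_range_succ]
        congr 1
        · exact Finset.prod_congr rfl (fun p _ => by congr 1; omega)
        · exact congrArg h (by omega)
      have l2 : (∏ p ∈ Finset.range (k+1), h (p + a))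
          = (∏ p ∈ Finset.range k, h ((p+1) + a)) * h a := by
        rw [Finset.prod_range_succ']
        congr 1
        exact congrArg h (by omega)
      rw [l1, hper, ← l2, ih]

lemma prod_even_shift (μ : ℕ) (f : ℕ → ℤˣ) (hshift : ∀ p, f (p + μ) = f p) :
    ∏ p ∈ Finset.range (μ + μ), f p = 1 := by
  rw [Finset.prod_range_add]
  rw [Finset.prod_congr rfl (fun p (_ : p ∈ Finset.range μ) =>
    (by rw [add_comm, hshift] : f (μ + p) = f p))]
  rw [← sq]
  exact Int.units_sq _

lemma prod_odd_shift (μ : ℕ) (f g : ℕ → ℤˣ)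
    (hgper : ∀ p, g (p + (2*μ+1)) = g p)
    (hshift : ∀ p, g (p + μ) = f p) :
    ∏ p ∈ Finset.range (2*μ+1), (f p * g p) = 1 := by
  rw [Finset.prod_mul_distrib]
  have h1 : (∏ p ∈ Finset.range (2*μ+1), g p) = ∏ p ∈ Finset.range (2*μ+1), f p := by
    have h2 := prod_shift g (2*μ) (fun p => hgper p) μ
    rw [← h2]
    exact Finset.prod_congr rfl (fun p _ => hshift p)
  rw [h1, ← sq]
  exact Int.units_sq _

lemma liftable_eta (cs : CoxeterSystem M W) : M.IsLiftable (fun b => etaP cs b) := by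
  intro b b'
  rcases Nat.eq_zero_or_pos (M b b') with h0 | hpos
  · rw [h0, pow_zero]
  · set m := M.M b b' with hm
    set q := cs.simple b * cs.simple b' with hq
    have hqm : q ^ m = 1 := cs.simple_mul_simple_pow b b'
    have hq1 : cs.simple b' * q * cs.simple b' = q⁻¹ := by
      rw [hq, mul_inv_rev, cs.inv_simple, cs.inv_simple]
      simp [mul_assoc, cs.simple_mul_simple_self]
    have hconj : ∀ n : ℕ, cs.simple b' * q^n * cs.simple b' = (q^n)⁻¹ := by
      intro n
      induction n with
      | zero => simp
      | succ n ih =>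
          have hsplit : cs.simple b' * q^(n+1) * cs.simple b'
              = (cs.simple b' * q^n * cs.simple b') * (cs.simple b' * q * cs.simple b') := by
            rw [pow_succ]
            simp [mul_assoc, cs.simple_mul_simple_cancel_left]
          rw [hsplit, ih, hq1, ← mul_inv_rev, ← pow_succ']
    have hqper : ∀ p : ℕ, q^(p+m) = q^p := fun p => by rw [pow_add, hqm, mul_one]
    have hmarker : cs.simple b' * cs.simple b * cs.simple b' = cs.simple b' * q := by
      rw [hq, mul_assoc]
    refine Equiv.ext fun x => ?_
    obtain ⟨t, ε⟩ := x
    rw [Equiv.Perm.one_apply, eta_pow_apply, ← hq]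
    rw [Prod.mk.injEq]
    refine ⟨by rw [hqm]; simp, ?_⟩
    suffices hS : (∏ p ∈ Finset.range m,
        Fsgn cs b b' (q^p * t * (q^p)⁻¹)) = 1 by rw [hS, mul_one]
    set f : ℕ → ℤˣ := fun p => if t = (q^p)⁻¹ * cs.simple b' * q^p then -1 else 1 with hf
    set g : ℕ → ℤˣ := fun p =>
      if t = (q^p)⁻¹ * (cs.simple b' * cs.simple b * cs.simple b') * q^p then -1 else 1 with hg
    have hFfg : ∀ p, Fsgn cs b b' (q^p * t * (q^p)⁻¹) = f p * g p := by
      intro p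
      have c1 := conj_eq_iff (q^p) (cs.simple b') t
      have c2 := conj_eq_iff (q^p) (cs.simple b' * cs.simple b * cs.simple b') t
      simp only [Fsgn, hf, hg]
      rw [if_congr c1 rfl rfl, if_congr c2 rfl rfl]
    rw [Finset.prod_congr rfl (fun p _ => hFfg p)]
    rcases Nat.even_or_odd m with heven | hodd
    · -- even case : m = μ + μ
      obtain ⟨μ, hμ⟩ := heven
      have hinv : (q^μ)⁻¹ = q^μ := by
        have h2 : q^μ * q^μ = 1 := by rw [← pow_add, ← hμ, hqm]
        rw [inv_eq_of_mul_eq_one_right h2]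
      have hcomm : cs.simple b' * q^μ = q^μ * cs.simple b' := by
        have h := hconj μ
        rw [hinv] at h
        calc cs.simple b' * q^μ
            = (cs.simple b' * q^μ * cs.simple b') * cs.simple b' := by
              rw [cs.simple_mul_simple_cancel_right]
          _ = q^μ * cs.simple b' := by rw [h]
      have hyb1 : (q^μ)⁻¹ * cs.simple b' * q^μ = cs.simple b' := by
        rw [mul_assoc, hcomm, inv_mul_cancel_left]
      have hcomm2 : (cs.simple b' * q) * q^μ = q^μ * (cs.simple b' * q) := by
        rw [mul_assoc, ← pow_succ']
        rw [show q ^ (μ+1) = q^μ * q from pow_succ q μ]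
        rw [← mul_assoc, hcomm, mul_assoc]
      have hyb2 : (q^μ)⁻¹ * (cs.simple b' * q) * q^μ
          = cs.simple b' * q := by
        rw [mul_assoc, hcomm2, inv_mul_cancel_left]
      have hfshift : ∀ p, f (p + μ) = f p := by
        intro p
        simp only [hf]
        rw [conj_pow_shift q (cs.simple b') (cs.simple b') μ p hyb1]
      have hgshift : ∀ p, g (p + μ) = g p := by
        intro p
        simp only [hg, hmarker]
        rw [conj_pow_shift q (cs.simple b' * q) (cs.simple b' * q) μ p hyb2]
      rw [hμ]
      exact prod_even_shift μ (fun p => f p * g p)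
        (fun p => by show f (p+μ) * g (p+μ) = f p * g p; rw [hfshift, hgshift])
    · -- odd case : m = 2μ + 1
      obtain ⟨μ, hμ⟩ := hodd
      have hinv : (q^(μ+1))⁻¹ = q^μ := by
        have h2 : q^(μ+1) * q^μ = 1 := by
          rw [← pow_add, show μ+1+μ = 2*μ+1 by omega, ← hμ, hqm]
        rw [inv_eq_of_mul_eq_one_right h2]
      have key : cs.simple b' * q^(μ+1) = q^μ * cs.simple b' := by
        have h := hconj (μ+1)
        rw [hinv] at h
        calc cs.simple b' * q^(μ+1)
            = (cs.simple b' * q^(μ+1) * cs.simple b') * cs.simple b' := by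
              rw [cs.simple_mul_simple_cancel_right]
          _ = q^μ * cs.simple b' := by rw [h]
      have base : (q^μ)⁻¹ * (cs.simple b' * q) * q^μ = cs.simple b' := by
        have e : (cs.simple b' * q) * q^μ = q^μ * cs.simple b' := by
          rw [mul_assoc, ← pow_succ']
          exact key
        rw [mul_assoc, e, inv_mul_cancel_left]
      have hgper : ∀ p, g (p + m) = g p := by
        intro p
        simp only [hg]
        rw [hqper p]
      have hgshift : ∀ p, g (p + μ) = f p := by
        intro p
        simp only [hg, hf, hmarker]
        rw [conj_pow_shift q (cs.simple b' * q) (cs.simple b') μ p base]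
      rw [hμ]
      refine prod_odd_shift μ f g (fun p => by rw [← hμ] at *; exact hgper p) hgshift

end SignRep2

end Stmt10

namespace Stmt10

section NSign

open CoxeterSystem
open scoped Classical

variable {W : Type*} [Group W] {M : CoxeterMatrix B}

/-- The sign representation as a homomorphism. -/
noncomputable def rhos (cs : CoxeterSystem M W) : W →* Equiv.Perm (W × ℤˣ) :=
  cs.lift ⟨fun b => etaP cs b, liftable_eta cs⟩

lemma rhos_simple (cs : CoxeterSystem M W) (b : B) :
    rhos cs (cs.simple b) = etaP cs b :=
  cs.lift_apply_simple (liftable_eta cs) b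

/-- The sign cocycle. -/
noncomputable def nsign (cs : CoxeterSystem M W) (w t : W) : ℤˣ :=
  ((rhos cs w) (t, 1)).2

lemma rhos_word_apply (cs : CoxeterSystem M W) (ω : List B) :
    ∀ (t : W) (ε : ℤˣ), (rhos cs (cs.wordProd ω)) (t, ε)
      = (cs.wordProd ω * t * (cs.wordProd ω)⁻¹, ε * nsign cs (cs.wordProd ω) t) := by
  induction ω with
  | nil =>
      intro t ε
      rw [cs.wordProd_nil, map_one]
      simp [nsign]
  | cons b ω ih =>
      intro t ε
      have hx : ∀ (ε' : ℤˣ), (rhos cs (cs.wordProd (b :: ω))) (t, ε')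
          = (cs.simple b * (cs.wordProd ω * t * (cs.wordProd ω)⁻¹) * cs.simple b,
             if cs.wordProd ω * t * (cs.wordProd ω)⁻¹ = cs.simple b
               then -(ε' * nsign cs (cs.wordProd ω) t)
               else ε' * nsign cs (cs.wordProd ω) t) := by
        intro ε'
        rw [cs.wordProd_cons, map_mul, Equiv.Perm.mul_apply, ih, rhos_simple]
        rfl
      rw [hx ε]
      have hfst : cs.simple b * (cs.wordProd ω * t * (cs.wordProd ω)⁻¹) * cs.simple b
          = cs.wordProd (b :: ω) * t * (cs.wordProd (b :: ω))⁻¹ := by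
        rw [cs.wordProd_cons, mul_inv_rev, cs.inv_simple]
        simp [mul_assoc]
      rw [Prod.mk.injEq]
      refine ⟨hfst, ?_⟩
      have hsnd : nsign cs (cs.wordProd (b :: ω)) t
          = (if cs.wordProd ω * t * (cs.wordProd ω)⁻¹ = cs.simple b
               then -((1:ℤˣ) * nsign cs (cs.wordProd ω) t)
               else (1:ℤˣ) * nsign cs (cs.wordProd ω) t) := by
        show ((rhos cs (cs.wordProd (b :: ω))) (t, 1)).2 = _
        rw [hx 1]
      rw [hsnd]
      by_cases hcond : cs.wordProd ω * t * (cs.wordProd ω)⁻¹ = cs.simple b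
      · rw [if_pos hcond, if_pos hcond]; simp
      · rw [if_neg hcond, if_neg hcond]; simp

lemma rhos_apply (cs : CoxeterSystem M W) (w t : W) (ε : ℤˣ) :
    (rhos cs w) (t, ε) = (w * t * w⁻¹, ε * nsign cs w t) := by
  obtain ⟨ω, -, rfl⟩ := cs.exists_reduced_word w
  exact rhos_word_apply cs ω t ε

lemma nsign_one (cs : CoxeterSystem M W) (t : W) : nsign cs 1 t = 1 := by
  simp [nsign]

lemma nsign_mul (cs : CoxeterSystem M W) (u v t : W) :
    nsign cs (u * v) t = nsign cs u (v * t * v⁻¹) * nsign cs v t := by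
  show ((rhos cs (u*v)) (t, 1)).2 = _
  rw [map_mul, Equiv.Perm.mul_apply, rhos_apply, rhos_apply]
  show (1 : ℤˣ) * nsign cs v t * nsign cs u (v * t * v⁻¹) = _
  rw [one_mul, mul_comm]

lemma nsign_simple (cs : CoxeterSystem M W) (b : B) (t : W) :
    nsign cs (cs.simple b) t = if t = cs.simple b then -1 else 1 := by
  show ((rhos cs (cs.simple b)) (t, 1)).2 = _
  rw [rhos_simple]
  show (if t = cs.simple b then -(1:ℤˣ) else 1) = _
  split_ifs <;> rfl

lemma nsign_eq_count (cs : CoxeterSystem M W) (ω : List B) (t : W) :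
    nsign cs (cs.wordProd ω) t = (-1) ^ ((cs.rightInvSeq ω).count t) := by
  induction ω with
  | nil =>
      rw [cs.wordProd_nil, nsign_one]
      simp
  | cons b ω ih =>
      rw [cs.wordProd_cons, nsign_mul, ih, nsign_simple]
      have hris : cs.rightInvSeq (b :: ω)
          = ((cs.wordProd ω)⁻¹ * cs.simple b * cs.wordProd ω) :: cs.rightInvSeq ω := rfl
      rw [hris, List.count_cons]
      have hiff : (cs.wordProd ω * t * (cs.wordProd ω)⁻¹ = cs.simple b)
          ↔ (t = (cs.wordProd ω)⁻¹ * cs.simple b * cs.wordProd ω) := by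
        have h := conj_eq_iff (cs.wordProd ω) (cs.simple b) t
        exact h
      by_cases h : t = (cs.wordProd ω)⁻¹ * cs.simple b * cs.wordProd ω
      · rw [if_pos (hiff.mpr h)]
        have : ((cs.wordProd ω)⁻¹ * cs.simple b * cs.wordProd ω == t) = true := by
          simp [h.symm]
        rw [if_pos this, pow_succ]
        exact mul_comm _ _
      · rw [if_neg (fun hc => h (hiff.mp hc))]
        have : ¬ (((cs.wordProd ω)⁻¹ * cs.simple b * cs.wordProd ω == t) = true) := by
          simp
          intro hc
          exact absurd hc.symm h
        rw [if_neg this, add_zero]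
        exact one_mul _

lemma descent_of_nsign (cs : CoxeterSystem M W) (w t : W) (h : nsign cs w t = -1) :
    cs.length (w * t) < cs.length w := by
  obtain ⟨ω, hlen, rfl⟩ := cs.exists_reduced_word w
  have hcount := nsign_eq_count cs ω t
  rw [h] at hcount
  have hne : (cs.rightInvSeq ω).count t ≠ 0 := by
    intro h0
    rw [h0, pow_zero] at hcount
    exact absurd hcount (by decide)
  have hmem : t ∈ cs.rightInvSeq ω := by
    by_contra hnm
    exact hne (List.count_eq_zero_of_not_mem hnm)
  obtain ⟨j, hj, hjeq⟩ := List.getElem_of_mem hmem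
  have hgetD : (cs.rightInvSeq ω).getD j 1 = t := by
    rw [List.getD_eq_getElem _ _ hj, hjeq]
  have herase := cs.wordProd_mul_getD_rightInvSeq ω j
  rw [hgetD] at herase
  have hjlen : j < ω.length := by
    have := cs.length_rightInvSeq ω
    omega
  have hlenle := cs.length_wordProd_le (ω.eraseIdx j)
  rw [← herase] at hlenle
  rw [List.length_eraseIdx, if_pos hjlen] at hlenle
  have hlen' : cs.length (cs.wordProd ω) = ω.length := hlen
  omega

lemma nsign_refl_self (cs : CoxeterSystem M W) (t : W) (ht : cs.IsReflection t) :
    nsign cs t t = -1 := by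
  obtain ⟨u, b, rfl⟩ := ht
  set t := u * cs.simple b * u⁻¹ with hts
  have h1 : t = u * (cs.simple b * u⁻¹) := by rw [hts, mul_assoc]
  have harg : (cs.simple b * u⁻¹) * t * (cs.simple b * u⁻¹)⁻¹ = cs.simple b := by
    rw [hts, mul_inv_rev, inv_inv, cs.inv_simple]
    simp [mul_assoc, inv_mul_cancel_left, cs.simple_mul_simple_cancel_left]
  have harg2 : u⁻¹ * t * (u⁻¹)⁻¹ = cs.simple b := by
    rw [hts, inv_inv]
    simp [mul_assoc, inv_mul_cancel_left]
  have hkey : nsign cs u (cs.simple b) * nsign cs u⁻¹ t = 1 := by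
    have h3 := nsign_mul cs u u⁻¹ t
    rw [mul_inv_cancel, nsign_one, harg2] at h3
    exact h3.symm
  have h4 : nsign cs (cs.simple b * u⁻¹) t
      = nsign cs (cs.simple b) (u⁻¹ * t * (u⁻¹)⁻¹) * nsign cs u⁻¹ t := nsign_mul cs _ _ t
  rw [harg2, nsign_simple, if_pos rfl] at h4
  have h5 : nsign cs t t
      = nsign cs u ((cs.simple b * u⁻¹) * t * (cs.simple b * u⁻¹)⁻¹)
        * nsign cs (cs.simple b * u⁻¹) t := by
    nth_rewrite 1 [h1]
    exact nsign_mul cs u (cs.simple b * u⁻¹) t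
  rw [harg, h4] at h5
  rcases Int.units_eq_one_or (nsign cs u (cs.simple b)) with ha | ha <;>
    rcases Int.units_eq_one_or (nsign cs u⁻¹ t) with hb | hb <;>
      rw [ha, hb] at hkey h5 <;> simp_all

lemma nsign_of_descent (cs : CoxeterSystem M W) (w t : W) (ht : cs.IsReflection t)
    (h : cs.length (w * t) < cs.length w) : nsign cs w t = -1 := by
  have htt : t * t = 1 := ht.mul_self
  have hw : (w * t) * t = w := by rw [mul_assoc, htt, mul_one]
  have hv : nsign cs (w * t) t = 1 := by
    rcases Int.units_eq_one_or (nsign cs (w*t) t) with h1 | h1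
    · exact h1
    · exfalso
      have := descent_of_nsign cs (w*t) t h1
      rw [hw] at this
      omega
  have harg : t * t * t⁻¹ = t := by rw [htt, one_mul, ht.inv]
  have hco := nsign_mul cs (w*t) t t
  rw [hw, harg, nsign_refl_self cs t ht, hv] at hco
  simpa using hco

/-- Exchange-type lemma: a simple left descent can be pushed into a reduced word. -/
lemma exchange_simple (cs : CoxeterSystem M W) (k : B) (ω : List B) (hred : cs.IsReduced ω)
    (h : cs.length (cs.simple k * cs.wordProd ω) < cs.length (cs.wordProd ω)) :
    ∃ j < ω.length, cs.simple k * cs.wordProd (ω.take j) = cs.wordProd (ω.take (j+1)) := by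
  have h1 : cs.length ((cs.wordProd ω)⁻¹ * cs.simple k) < cs.length ((cs.wordProd ω)⁻¹) := by
    have he : (cs.wordProd ω)⁻¹ * cs.simple k = (cs.simple k * cs.wordProd ω)⁻¹ := by
      rw [mul_inv_rev, cs.inv_simple]
    rw [he, cs.length_inv, cs.length_inv]
    exact h
  have hns := nsign_of_descent cs ((cs.wordProd ω)⁻¹) (cs.simple k)
    (cs.isReflection_simple k) h1
  have hwrev : cs.wordProd ω.reverse = (cs.wordProd ω)⁻¹ := cs.wordProd_reverse ω
  have hcnt := nsign_eq_count cs ω.reverse (cs.simple k)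
  rw [hwrev, hns] at hcnt
  have hmem : cs.simple k ∈ cs.rightInvSeq ω.reverse := by
    by_contra hnm
    rw [List.count_eq_zero_of_not_mem hnm, pow_zero] at hcnt
    exact absurd hcnt (by decide)
  rw [cs.rightInvSeq_reverse, List.mem_reverse] at hmem
  obtain ⟨j, hj, hjeq⟩ := List.getElem_of_mem hmem
  have hjlen : j < ω.length := by
    have := cs.length_leftInvSeq ω
    omega
  refine ⟨j, hjlen, ?_⟩
  have hgetD : (cs.leftInvSeq ω).getD j 1 = cs.simple k := by
    rw [List.getD_eq_getElem _ _ hj, hjeq]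
  rw [cs.getD_leftInvSeq] at hgetD
  have hget : ω[j]? = some (ω[j]) := by
    rw [List.getElem?_eq_getElem hjlen]
  rw [hget] at hgetD
  simp only [Option.map_some, Option.getD_some] at hgetD
  have htake : cs.wordProd (ω.take (j+1)) = cs.wordProd (ω.take j) * cs.simple (ω[j]) := by
    rw [List.take_succ, cs.wordProd_append, List.getElem?_eq_getElem hjlen]
    simp [cs.wordProd_singleton]
  rw [htake, ← hgetD]
  group

end NSign

end Stmt10

namespace Stmt10

section Final

open CoxeterSystem

variable {W : Type*} [Group W] {M : CoxeterMatrix B}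

lemma take_alt (i j : B) : ∀ (p r : ℕ), r ≤ p →
    List.take r (alternatingWord i j p)
      = if Even (p - r) then alternatingWord i j r else alternatingWord j i r := by
  intro p
  induction p with
  | zero =>
      intro r hr
      have : r = 0 := by omega
      subst this
      simp [show alternatingWord i j 0 = ([]:List B) from rfl]
  | succ p ih =>
      intro r hr
      rcases Nat.eq_zero_or_pos r with rfl | hrpos
      · have h0 : alternatingWord i j 0 = ([] : List B) := rfl
        have h0' : alternatingWord j i 0 = ([] : List B) := rfl
        rw [List.take_zero, h0, h0']
        split_ifs <;> rfl
      · obtain ⟨r', rfl⟩ : ∃ r', r = r' + 1 := ⟨r - 1, by omega⟩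
        rw [alternatingWord_succ' i j p, List.take_succ_cons]
        rw [ih r' (by omega)]
        have hsub : p + 1 - (r'+1) = p - r' := by omega
        rw [hsub]
        by_cases hev : Even (p - r')
        · rw [if_pos hev, if_pos hev]
          rw [alternatingWord_succ' i j r']
          have hpar : (Even p ↔ Even r') := (Nat.even_sub (by omega : r' ≤ p)).mp hev
          congr 1
          by_cases h2 : Even p
          · rw [if_pos h2, if_pos (hpar.mp h2)]
          · rw [if_neg h2, if_neg (fun hc => h2 (hpar.mpr hc))]
        · rw [if_neg hev, if_neg hev]
          rw [alternatingWord_succ' j i r']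
          have hpar : ¬(Even p ↔ Even r') := fun hc => hev ((Nat.even_sub (by omega : r' ≤ p)).mpr hc)
          congr 1
          by_cases h2 : Even p
          · rw [if_pos h2, if_neg (fun hr2 => hpar ⟨fun _ => hr2, fun _ => h2⟩)]
          · have hr2 : Even r' := by
              by_contra hr2
              exact hpar ⟨fun hq => absurd hq h2, fun hq => absurd hq hr2⟩
            rw [if_neg h2, if_pos hr2]

lemma pow_eq_one_of_alt_eq (cs : CoxeterSystem M W) (i j : B) (n : ℕ)
    (h : cs.wordProd (alternatingWord i j n) = cs.wordProd (alternatingWord j i n)) :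
    (cs.simple i * cs.simple j) ^ n = 1 := by
  rw [cs.prod_alternatingWord_eq_mul_pow, cs.prod_alternatingWord_eq_mul_pow] at h
  have h2 : cs.simple j * cs.simple i = (cs.simple i * cs.simple j)⁻¹ := by
    rw [mul_inv_rev, cs.inv_simple, cs.inv_simple]
  by_cases hev : Even n
  · rw [if_pos hev, if_pos hev, one_mul, one_mul, h2, inv_pow] at h
    obtain ⟨c, hc⟩ := hev
    have hd : n / 2 = c := by omega
    rw [hd] at h
    rw [hc, pow_add]
    nth_rewrite 2 [h]
    simp
  · rw [if_neg hev, if_neg hev, h2, inv_pow] at h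
    obtain ⟨c, hc⟩ := Nat.not_even_iff_odd.mp hev
    have hd : n / 2 = c := by omega
    rw [hd] at h
    have h3 : (cs.simple i * cs.simple j) * (cs.simple i * cs.simple j)^c
        = ((cs.simple i * cs.simple j)^c)⁻¹ := by
      calc (cs.simple i * cs.simple j) * (cs.simple i * cs.simple j)^c
          = cs.simple i * (cs.simple j * (cs.simple i * cs.simple j)^c) := by
            rw [mul_assoc]
        _ = cs.simple i * (cs.simple i * ((cs.simple i * cs.simple j)^c)⁻¹) := by rw [h]
        _ = ((cs.simple i * cs.simple j)^c)⁻¹ := cs.simple_mul_simple_cancel_left i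
    rw [hc, show 2*c+1 = c + (c+1) by omega, pow_add, pow_succ']
    rw [h3]
    simp

lemma isReduced_alt (cs : CoxeterSystem M W) (i j : B) (hij : i ≠ j) (hm2 : 2 ≤ M i j) :
    ∀ p, p ≤ M i j → cs.IsReduced (alternatingWord i j p) := by
  intro p
  induction p with
  | zero =>
      intro _
      show cs.length (cs.wordProd (alternatingWord i j 0)) = _
      have h0 : alternatingWord i j 0 = ([] : List B) := rfl
      rw [h0]
      simp
  | succ p ih =>
      intro hp
      have hred := ih (by omega)
      have hlen : cs.length (cs.wordProd (alternatingWord i j p)) = p := by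
        have h := hred
        rw [CoxeterSystem.IsReduced] at h
        rw [h, CoxeterSystem.length_alternatingWord]
      set k := if Even p then j else i with hk
      have hsucc : alternatingWord i j (p+1) = k :: alternatingWord i j p :=
        CoxeterSystem.alternatingWord_succ' i j p
      rcases cs.length_simple_mul (cs.wordProd (alternatingWord i j p)) k with hup | hdown
      · show cs.length (cs.wordProd (alternatingWord i j (p+1))) = _
        rw [hsucc, cs.wordProd_cons, hup, hlen, List.length_cons,
          CoxeterSystem.length_alternatingWord]
      · exfalso
        have hdesc : cs.length (cs.simple k * cs.wordProd (alternatingWord i j p))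
            < cs.length (cs.wordProd (alternatingWord i j p)) := by omega
        obtain ⟨r, hr, heq⟩ := exchange_simple cs k (alternatingWord i j p) hred hdesc
        rw [CoxeterSystem.length_alternatingWord] at hr
        have ht1 := take_alt i j p r (le_of_lt hr)
        have ht2 := take_alt i j p (r+1) (by omega)
        have hsub : p - r = (p - (r+1)) + 1 := by omega
        by_cases hev : Even (p - r)
        · rw [if_pos hev] at ht1
          have hodd : ¬ Even (p - (r+1)) := by
            intro hc
            rw [hsub] at hev
            exact (Nat.even_add_one.mp hev) hc
          rw [if_neg hodd] at ht2
          rw [ht1, ht2] at heq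
          have hpar : (Even p ↔ Even r) := (Nat.even_sub (le_of_lt hr)).mp hev
          have hk2 : k = (if Even r then j else i) := by
            rw [hk]
            by_cases h2 : Even p
            · rw [if_pos h2, if_pos (hpar.mp h2)]
            · rw [if_neg h2, if_neg (fun hc => h2 (hpar.mpr hc))]
          have hcons : cs.wordProd (alternatingWord i j (r+1))
              = cs.wordProd (alternatingWord j i (r+1)) := by
            rw [CoxeterSystem.alternatingWord_succ' i j r, cs.wordProd_cons, ← hk2, heq]
          have hpow := pow_eq_one_of_alt_eq cs i j (r+1) hcons
          exact order_lemma cs i j hm2 (Nat.succ_pos r) (by omega) hpow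
        · rw [if_neg hev] at ht1
          have hevs : Even (p - (r+1)) := by
            rw [hsub] at hev
            by_contra hc
            exact hev (Nat.even_add_one.mpr hc)
          rw [if_pos hevs] at ht2
          rw [ht1, ht2] at heq
          have hpar : ¬(Even p ↔ Even r) := fun hc => hev ((Nat.even_sub (le_of_lt hr)).mpr hc)
          have hk2 : k = (if Even r then i else j) := by
            rw [hk]
            by_cases h2 : Even p
            · rw [if_pos h2, if_neg (fun hr2 => hpar ⟨fun _ => hr2, fun _ => h2⟩)]
            · have hr2 : Even r := by
                by_contra hr2
                exact hpar ⟨fun hq => absurd hq h2, fun hq => absurd hq hr2⟩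
              rw [if_neg h2, if_pos hr2]
          have hcons : cs.wordProd (alternatingWord j i (r+1))
              = cs.wordProd (alternatingWord i j (r+1)) := by
            rw [CoxeterSystem.alternatingWord_succ' j i r, cs.wordProd_cons, ← hk2, heq]
          have hpow := pow_eq_one_of_alt_eq cs j i (r+1) hcons
          have hpow2 : (cs.simple i * cs.simple j) ^ (r+1) = 1 := by
            have h2 : cs.simple j * cs.simple i = (cs.simple i * cs.simple j)⁻¹ := by
              rw [mul_inv_rev, cs.inv_simple, cs.inv_simple]
            rw [h2, inv_pow, inv_eq_one] at hpow
            exact hpow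
          exact order_lemma cs i j hm2 (Nat.succ_pos r) (by omega) hpow2

lemma prod_map_eq (cs : CoxeterSystem M W) {N : Type*} [Monoid N] (m : W → N)
    (hgt : ∀ (i : B) (w : W), cs.length (cs.simple i * w) > cs.length w →
      m (cs.simple i) * m w = m (cs.simple i * w)) :
    ∀ ω : List B, cs.IsReduced ω → ω ≠ [] →
      ((ω.map (fun k => m (cs.simple k))).prod) = m (cs.wordProd ω) := by
  intro ω
  induction ω with
  | nil => intro _ h; exact absurd rfl h
  | cons b ω ih =>
      intro hred _
      rcases eq_or_ne ω [] with rfl | hne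
      · simp [cs.wordProd_singleton]
      · have hredtail : cs.IsReduced ω := by
          have := CoxeterSystem.IsReduced.drop hred 1
          simpa using this
        have hlen : cs.length (cs.wordProd ω) = ω.length := hredtail
        have hlenfull : cs.length (cs.wordProd (b :: ω)) = (b :: ω).length := hred
        have hup : cs.length (cs.simple b * cs.wordProd ω) > cs.length (cs.wordProd ω) := by
          rw [← cs.wordProd_cons, hlenfull, hlen, List.length_cons]
          omega
        rw [List.map_cons, List.prod_cons, ih hredtail hne, hgt b _ hup, cs.wordProd_cons]

end Final

end Stmt10


/-- Let `(W,S)` be a Coxeter system and let `m : W → N` be a map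
to a monoid `N` satisfying the defining relations of the 0-Hecke monoid
`M(W)`: `m(s) * m(w) = m(sw)` if `ℓ(sw) > ℓ(w)` and `m(s) * m(w) = m(w)` if
`ℓ(sw) < ℓ(w)`, for every simple reflection `s`.  Then every generator `m(s)`
is idempotent, and the generators `m(s)`, `s ∈ S`, satisfy the braid
relations of `(W,S)`: for all `i j`, the alternating product of
`m(sᵢ), m(sⱼ)` of length `M i j` starting with `i` equals the one starting
with `j`. -/
theorem stmt10 {B W : Type*} [Group W] {M : CoxeterMatrix B}
    (cs : CoxeterSystem M W) {N : Type*} [Monoid N] (m : W → N)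
    (hgt : ∀ (i : B) (w : W), cs.length (cs.simple i * w) > cs.length w →
      m (cs.simple i) * m w = m (cs.simple i * w))
    (hlt : ∀ (i : B) (w : W), cs.length (cs.simple i * w) < cs.length w →
      m (cs.simple i) * m w = m w) :
    (∀ i : B, m (cs.simple i) * m (cs.simple i) = m (cs.simple i))
    ∧ (∀ i j : B,
        ((CoxeterSystem.alternatingWord i j (M i j)).map
            (fun k => m (cs.simple k))).prod =
        ((CoxeterSystem.alternatingWord j i (M j i)).map
            (fun k => m (cs.simple k))).prod) := by
  constructor
  · intro i
    apply hlt
    rw [cs.simple_mul_simple_self, cs.length_one, cs.length_simple]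
    omega
  · intro i j
    rcases eq_or_ne i j with rfl | hij
    · rfl
    · rcases Nat.eq_zero_or_pos (M.M i j) with h0 | hpos
      · have h0' : M.M j i = 0 := by rw [M.symmetric j i]; exact h0
        rw [h0, h0']
        rfl
      · have hm2 : 2 ≤ M.M i j := by
          have := M.off_diagonal i j hij
          omega
        have hm2' : 2 ≤ M.M j i := by
          have hsymm : M.M j i = M.M i j := M.symmetric j i
          omega
        have hred1 := Stmt10.isReduced_alt cs i j hij hm2 (M.M i j) le_rfl
        have hred2 := Stmt10.isReduced_alt cs j i (Ne.symm hij) hm2' (M.M j i) le_rfl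
        have hne1 : CoxeterSystem.alternatingWord i j (M.M i j) ≠ [] := by
          intro hc
          have hlc := congrArg List.length hc
          rw [CoxeterSystem.length_alternatingWord] at hlc
          simp at hlc
          omega
        have hne2 : CoxeterSystem.alternatingWord j i (M.M j i) ≠ [] := by
          intro hc
          have hlc := congrArg List.length hc
          rw [CoxeterSystem.length_alternatingWord] at hlc
          simp at hlc
          omega
        rw [Stmt10.prod_map_eq cs m hgt _ hred1 hne1, Stmt10.prod_map_eq cs m hgt _ hred2 hne2]
        exact congrArg m (cs.wordProd_braidWord_eq i j)
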